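/- Let k ≥ 1 and d ≥ 4 be integers, and let G be a simple k-connected graph of order n and diameter d. Then the number of edges of G is at most ((3d-5)k² + (5-d)k)/2 + C(n-kd+k-2, 2) + 3k(n-kd+k-2). -/

import Mathlib

/-- A graph is `k`-connected if it has more than `k` vertices and remains connected
whenever fewer than `k` vertices are deleted. -/
def SimpleGraph.KConnected {V : Type*} [Fintype V] (k : ℕ) (G : SimpleGraph V) : Prop :=
  k < Fintype.card V ∧ ∀ S : Set V, S.ncard < k → (G.induce Sᶜ).Connected

open Finset


private lemma sq_sum_aux (b : ℕ → ℤ) :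
    ∀ t : ℕ, (∀ i, i ≤ t → 0 ≤ b i) →
      ∑ i ∈ range (t+1), (b i)^2 + 2 * ∑ i ∈ range t, b i * b (i+1)
        ≤ (∑ i ∈ range (t+1), b i)^2 := by
  intro t
  induction t with
  | zero => simp
  | succ t ih =>
    intro hb
    rw [sum_range_succ (f := fun i => (b i)^2), sum_range_succ (f := fun i => b i * b (i+1)),
      sum_range_succ (f := b)]
    have hbt : b t ≤ ∑ i ∈ range (t+1), b i := by
      apply Finset.single_le_sum (fun i hi => hb i (by simp at hi; omega))
      simp
    have ih' := ih (fun i hi => hb i (by omega))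
    nlinarith [hb (t+1) (le_refl _), hb t (by omega)]

private lemma main_alg (k d n : ℕ) (hk : 1 ≤ k) (hd : 4 ≤ d) (a : ℕ → ℕ)
    (ha0 : a 0 = 1) (had : 1 ≤ a d) (hmid : ∀ i, 1 ≤ i → i ≤ d - 1 → k ≤ a i)
    (hsum : ∑ i ∈ range (d+1), a i = n) (htop : a (d+1) = 0)
    (E : ℕ)
    (hE : 2 * E ≤ ∑ i ∈ range (d+1), a i * (a (i-1) + (a i - 1) + a (i+1))) :
    (E : ℤ) ≤ ((3*(d:ℤ)-5)*(k:ℤ)^2 + (5-(d:ℤ))*(k:ℤ))/2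
        + ((n:ℤ) - k*d + k - 2)*(((n:ℤ) - k*d + k - 2)-1)/2
        + 3*(k:ℤ)*((n:ℤ) - k*d + k - 2) := by
  have hkZ : (1:ℤ) ≤ (k:ℤ) := by exact_mod_cast hk
  have h1 : ∀ i, i ≤ d → 1 ≤ a i := by
    intro i hi
    rcases Nat.eq_zero_or_pos i with h0 | h0
    · rw [h0, ha0]
    · rcases Nat.lt_or_ge i d with h2 | h2
      · exact le_trans hk (hmid i h0 (by omega))
      · have : i = d := by omega
        rw [this]; exact had
  have hEZ : 2 * (E:ℤ) ≤ ∑ i ∈ range (d+1),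
      (a i : ℤ) * ((a (i-1) : ℤ) + (a i : ℤ) - 1 + (a (i+1) : ℤ)) := by
    calc 2*(E:ℤ) = ((2*E : ℕ) : ℤ) := by push_cast; ring
    _ ≤ ((∑ i ∈ range (d+1), a i * (a (i-1) + (a i - 1) + a (i+1)) : ℕ) : ℤ) := by
        exact_mod_cast hE
    _ = _ := by
        rw [Nat.cast_sum]
        refine sum_congr rfl fun i hi => ?_
        have h1i := h1 i (by have := mem_range.mp hi; omega)
        push_cast [Nat.cast_sub h1i]
        ring
  -- setup
  set m : ℤ := (n:ℤ) - (k:ℤ)*(d:ℤ) + (k:ℤ) - 2 with hm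
  set c : ℕ → ℤ := fun i => if i = 0 then 1 else if i = d then 1 else (k:ℤ) with hc
  set b : ℕ → ℤ := fun i => if i ≤ d then (a i : ℤ) - c i else 0 with hbdef
  have hab : ∀ i, i ≤ d → (a i : ℤ) = b i + c i := by
    intro i hi; simp only [hbdef]; rw [if_pos hi]; ring
  have hc0 : c 0 = 1 := by simp [hc]
  have hcd : c d = 1 := by simp only [hc]; rw [if_neg (by omega : ¬ d = 0)]; simp
  have hcmid : ∀ i, ¬ i = 0 → ¬ i = d → c i = (k:ℤ) := by
    intro i hi0 hid; simp only [hc]; rw [if_neg hi0, if_neg hid]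
  have hck : ∀ i, c i ≤ (k:ℤ) := by
    intro i
    by_cases h0 : i = 0
    · rw [h0, hc0]; exact hkZ
    · by_cases h2 : i = d
      · rw [h2, hcd]; exact hkZ
      · rw [hcmid i h0 h2]
  have hbnn : ∀ i, 0 ≤ b i := by
    intro i
    simp only [hbdef]
    by_cases hi : i ≤ d
    · rw [if_pos hi]
      by_cases h0 : i = 0
      · rw [h0, hc0, ha0]; norm_num
      · by_cases h2 : i = d
        · subst h2; rw [hcd]
          have : (1:ℤ) ≤ (a i : ℤ) := by exact_mod_cast had
          linarith
        · rw [hcmid i h0 h2]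
          have : (k:ℤ) ≤ (a i : ℤ) := by exact_mod_cast hmid i (by omega) (by omega)
          linarith
    · rw [if_neg hi]
  have hb0 : b 0 = 0 := by
    simp only [hbdef]; rw [if_pos (by omega), hc0, ha0]; norm_num
  -- peeling helpers
  have peel : ∀ f : ℕ → ℤ, ∑ i ∈ range (d+1), f i
      = ∑ i ∈ range (d-1), f (i+1) + f d + f 0 := by
    intro f
    rw [Finset.sum_range_succ' f d]
    congr 1
    conv_lhs => rw [show d = (d-1)+1 by omega, Finset.sum_range_succ]
    rw [show d - 1 + 1 = d by omega]
  have peel2 : ∀ f : ℕ → ℤ, ∑ i ∈ range d, f i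
      = ∑ i ∈ range (d-2), f (i+1) + f (d-1) + f 0 := by
    intro f
    conv_lhs => rw [show d = (d-1)+1 by omega]
    rw [Finset.sum_range_succ' f (d-1)]
    congr 1
    conv_lhs => rw [show d-1 = (d-2)+1 by omega, Finset.sum_range_succ]
    rw [show d - 2 + 1 = d - 1 by omega]
  have hdcast : ((d - 1 : ℕ) : ℤ) = (d:ℤ) - 1 := by
    push_cast [Nat.cast_sub (by omega : 1 ≤ d)]; ring
  have hdcast2 : ((d - 2 : ℕ) : ℤ) = (d:ℤ) - 2 := by
    push_cast [Nat.cast_sub (by omega : 2 ≤ d)]; ring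
  have hSc : ∑ i ∈ range (d+1), c i = ((d:ℤ)-1) * (k:ℤ) + 2 := by
    rw [peel c, hc0, hcd]
    rw [Finset.sum_congr rfl (fun i hi => hcmid (i+1) (by omega)
      (by have := mem_range.mp hi; omega))]
    rw [Finset.sum_const, nsmul_eq_mul, card_range, hdcast]
    ring
  have hScd : ∑ i ∈ range (d+1), ((c i)^2 - c i) = ((d:ℤ)-1) * ((k:ℤ)^2 - (k:ℤ)) := by
    rw [peel (fun i => (c i)^2 - c i), hc0, hcd]
    rw [Finset.sum_congr rfl (fun i hi => by
      rw [hcmid (i+1) (by omega) (by have := mem_range.mp hi; omega)])]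
    rw [Finset.sum_const, nsmul_eq_mul, card_range, hdcast]
    ring
  have hScc : ∑ i ∈ range d, c i * c (i+1) = ((d:ℤ)-2) * (k:ℤ)^2 + 2*(k:ℤ) := by
    rw [peel2 (fun i => c i * c (i+1)), hc0]
    rw [show d - 1 + 1 = d by omega, hcd,
      hcmid (d-1) (by omega) (by omega), hcmid 1 (by omega) (by omega)]
    rw [Finset.sum_congr rfl (fun i hi => by
      have := mem_range.mp hi
      rw [hcmid (i+1) (by omega) (by omega), hcmid (i+1+1) (by omega) (by omega)])]
    rw [Finset.sum_const, nsmul_eq_mul, card_range, hdcast2]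
    ring
  have hSa : ∑ i ∈ range (d+1), (a i : ℤ) = (n:ℤ) := by
    rw [← Nat.cast_sum, hsum]
  have hSb : ∑ i ∈ range (d+1), b i = m := by
    have : ∑ i ∈ range (d+1), b i = ∑ i ∈ range (d+1), ((a i : ℤ) - c i) := by
      refine sum_congr rfl fun i hi => ?_
      simp only [hbdef]; rw [if_pos (by have := mem_range.mp hi; omega)]
    rw [this, Finset.sum_sub_distrib, hSa, hSc, hm]
    ring
  -- decomposition of the main sum
  set Q : ℤ := ∑ i ∈ range d, (a i : ℤ) * (a (i+1) : ℤ) with hQ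
  have hT : ∑ i ∈ range (d+1),
      (a i : ℤ) * ((a (i-1) : ℤ) + (a i : ℤ) - 1 + (a (i+1) : ℤ))
      = (∑ i ∈ range (d+1), ((a i:ℤ)^2 - (a i:ℤ))) + 2*Q + 1 := by
    have e1 : ∀ i ∈ range (d+1), (a i:ℤ) * ((a (i-1):ℤ) + (a i:ℤ) - 1 + (a (i+1):ℤ))
        = ((a i:ℤ)^2 - (a i:ℤ)) + ((a i:ℤ)*(a (i-1):ℤ) + (a i:ℤ)*(a (i+1):ℤ)) := by
      intro i _; ring
    rw [Finset.sum_congr rfl e1, Finset.sum_add_distrib, Finset.sum_add_distrib]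
    have e2 : ∑ i ∈ range (d+1), (a i:ℤ)*(a (i-1):ℤ) = Q + 1 := by
      rw [Finset.sum_range_succ' (fun i => (a i:ℤ)*(a (i-1):ℤ)) d]
      simp only [Nat.add_sub_cancel, Nat.zero_sub, ha0]
      rw [hQ, Finset.sum_congr rfl (fun i _ => mul_comm ((a (i+1) : ℕ) : ℤ) ((a i : ℕ) : ℤ))]
      push_cast
      ring
    have e3 : ∑ i ∈ range (d+1), (a i:ℤ)*(a (i+1):ℤ) = Q := by
      rw [Finset.sum_range_succ, htop, hQ]
      push_cast
      ring
    rw [e2, e3]; ring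
  -- bound the quadratic/linear parts
  have hsq : ∑ i ∈ range (d+1), (b i)^2 + 2 * ∑ i ∈ range d, b i * b (i+1) ≤ m^2 := by
    have := sq_sum_aux b d (fun i _ => hbnn i)
    rwa [hSb] at this
  have L1 : ∑ i ∈ range (d+1), c i * b i ≤ (k:ℤ) * m := by
    calc ∑ i ∈ range (d+1), c i * b i ≤ ∑ i ∈ range (d+1), (k:ℤ) * b i :=
          Finset.sum_le_sum (fun i _ => mul_le_mul_of_nonneg_right (hck i) (hbnn i))
    _ = (k:ℤ) * m := by rw [← Finset.mul_sum, hSb]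
  have L2 : ∑ i ∈ range d, b i * c (i+1) ≤ (k:ℤ) * m := by
    calc ∑ i ∈ range d, b i * c (i+1) ≤ ∑ i ∈ range d, (k:ℤ) * b i :=
          Finset.sum_le_sum (fun i _ => by
            rw [mul_comm ((k:ℤ)) (b i)]
            exact mul_le_mul_of_nonneg_left (hck (i+1)) (hbnn i))
    _ ≤ ∑ i ∈ range (d+1), (k:ℤ) * b i := by
          apply Finset.sum_le_sum_of_subset_of_nonneg (Finset.range_subset_range.mpr (by omega))
          intro i _ _
          exact mul_nonneg (by linarith) (hbnn i)
    _ = (k:ℤ) * m := by rw [← Finset.mul_sum, hSb]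
  have L3 : ∑ i ∈ range d, c i * b (i+1) ≤ (k:ℤ) * m := by
    calc ∑ i ∈ range d, c i * b (i+1) ≤ ∑ i ∈ range d, (k:ℤ) * b (i+1) :=
          Finset.sum_le_sum (fun i _ => mul_le_mul_of_nonneg_right (hck i) (hbnn (i+1)))
    _ = (k:ℤ) * m := by
          have := Finset.sum_range_succ' (fun i => (k:ℤ) * b i) d
          rw [← Finset.mul_sum, ← Finset.mul_sum] at this
          rw [← Finset.mul_sum]
          rw [hSb, hb0] at this
          linarith
  -- pointwise decompositions
  have d1 : ∑ i ∈ range (d+1), ((a i:ℤ)^2 - (a i:ℤ))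
      = ∑ i ∈ range (d+1), ((c i)^2 - c i) + ∑ i ∈ range (d+1), (b i)^2
        - ∑ i ∈ range (d+1), b i + 2 * ∑ i ∈ range (d+1), c i * b i := by
    rw [Finset.mul_sum, ← Finset.sum_add_distrib, ← Finset.sum_sub_distrib,
      ← Finset.sum_add_distrib]
    refine Finset.sum_congr rfl fun i hi => ?_
    rw [hab i (by have := mem_range.mp hi; omega)]
    ring
  have d2 : Q = ∑ i ∈ range d, c i * c (i+1)
      + (∑ i ∈ range d, b i * b (i+1) + (∑ i ∈ range d, b i * c (i+1)
        + ∑ i ∈ range d, c i * b (i+1))) := by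
    rw [hQ, ← Finset.sum_add_distrib, ← Finset.sum_add_distrib, ← Finset.sum_add_distrib]
    refine Finset.sum_congr rfl fun i hi => ?_
    have hi' := mem_range.mp hi
    rw [hab i (by omega), hab (i+1) (by omega)]
    ring
  -- key bound
  have hkey : 2 * (E:ℤ) ≤ ((3*(d:ℤ)-5)*(k:ℤ)^2 + (5-(d:ℤ))*(k:ℤ)) + m*(m-1) + 2*(3*(k:ℤ)*m) := by
    have hU : (∑ i ∈ range (d+1), ((a i:ℤ)^2 - (a i:ℤ))) + 2*Q
        ≤ ((3*(d:ℤ)-5)*(k:ℤ)^2 + (5-(d:ℤ))*(k:ℤ)) + m*(m-1) + 2*(3*(k:ℤ)*m) := by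
      rw [d1, d2, hScd, hScc]
      linarith [hsq, L1, L2, L3, hSb]
    have hpar : 2 ∣ (∑ i ∈ range (d+1), ((a i:ℤ)^2 - (a i:ℤ))) + 2*Q := by
      apply Dvd.dvd.add _ ⟨Q, rfl⟩
      apply Finset.dvd_sum
      intro i _
      have : (a i:ℤ)^2 - (a i:ℤ) = (a i:ℤ) * ((a i:ℤ) - 1) := by ring
      rw [this]
      rcases Int.even_mul_succ_self ((a i:ℤ) - 1) with ⟨t, ht⟩
      exact ⟨t, by linarith⟩
    rw [hT] at hEZ
    obtain ⟨t, ht⟩ := hpar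
    rw [ht] at hEZ hU
    have h2 : 2*(E:ℤ) ≤ 2*t := by omega
    linarith
  -- final arithmetic
  have hdvdA : (2:ℤ) ∣ (3*(d:ℤ)-5)*(k:ℤ)^2 + (5-(d:ℤ))*(k:ℤ) := by
    rcases Int.even_mul_succ_self ((k:ℤ) - 1) with ⟨t, ht⟩
    exact ⟨(3*(d:ℤ)-5)*t + (d:ℤ)*(k:ℤ), by linear_combination (3*(d:ℤ)-5) * ht⟩
  have hdvdB : (2:ℤ) ∣ m*(m-1) := by
    rcases Int.even_mul_succ_self (m - 1) with ⟨t, ht⟩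
    exact ⟨t, by linarith⟩
  obtain ⟨p, hp⟩ := hdvdA
  obtain ⟨q, hq⟩ := hdvdB
  rw [hp, hq] at hkey ⊢
  rw [Int.mul_ediv_cancel_left _ (by norm_num), Int.mul_ediv_cancel_left _ (by norm_num)]
  linarith

private lemma walk_intermediate' {V : Type} (G : SimpleGraph V) (hc : G.Connected) (u : V) :
    ∀ {x y : V} (w : G.Walk x y) (i : ℕ), G.dist u x ≤ i → i ≤ G.dist u y →
      ∃ z ∈ w.support, G.dist u z = i := by
  intro x y w
  induction w with
  | nil => exact fun i h1 h2 => ⟨_, by simp, le_antisymm h1 h2⟩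
  | @cons x x' y h p ih =>
    intro i h1 h2
    by_cases hx : G.dist u x = i
    · exact ⟨x, by simp, hx⟩
    · have hlt : G.dist u x < i := lt_of_le_of_ne h1 hx
      have hstep : G.dist u x' ≤ G.dist u x + 1 := by
        have := hc.dist_triangle (u := u) (v := x) (w := x')
        rwa [(SimpleGraph.dist_eq_one_iff_adj).mpr h] at this
      obtain ⟨z, hz, hzi⟩ := ih i (by omega) h2
      exact ⟨z, by simp [hz], hzi⟩

/-- Upper bound in Ore's theorem, case `d ≥ 4`: a simple `k`-connected graph of order `n`
and diameter `d` has at most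
`((3d-5)k² + (5-d)k)/2 + C(n-kd+k-2, 2) + 3k(n-kd+k-2)` edges. -/
theorem size_le_of_kConnected_diam_ge_four (k d n : ℕ) {V : Type} [Fintype V]
    (G : SimpleGraph V) (hk : 1 ≤ k) (hd : 4 ≤ d)
    (hG : G.KConnected k) (hcard : Fintype.card V = n) (hdiam : G.diam = d) :
    (G.edgeSet.ncard : ℤ) ≤
      ((3 * (d : ℤ) - 5) * (k : ℤ) ^ 2 + (5 - (d : ℤ)) * (k : ℤ)) / 2
        + ((n : ℤ) - k * d + k - 2) * (((n : ℤ) - k * d + k - 2) - 1) / 2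
        + 3 * (k : ℤ) * ((n : ℤ) - k * d + k - 2) := by
  classical
  obtain ⟨hkcard, hconn'⟩ := hG
  have hconn : G.Connected := by
    have h := hconn' ∅ (by simp; omega)
    rw [Set.compl_empty] at h
    exact G.induceUnivIso.connected_iff.mp h
  have hne : Nonempty V := Fintype.card_pos_iff.mp (by omega)
  have hdne : G.diam ≠ 0 := by omega
  have hetop : G.ediam ≠ ⊤ := G.ediam_ne_top_of_diam_ne_zero hdne
  obtain ⟨u, v, huv⟩ := G.exists_dist_eq_diam
  rw [hdiam] at huv
  have hdle : ∀ x, G.dist u x ≤ d := fun x => hdiam ▸ SimpleGraph.dist_le_diam hetop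
  -- layers
  set L : ℕ → Finset V := fun i => univ.filter (fun x => G.dist u x = i) with hL
  set a : ℕ → ℕ := fun i => (L i).card with ha
  have hmemL : ∀ i x, x ∈ L i ↔ G.dist u x = i := by
    intro i x; rw [hL]; simp
  have ha0 : a 0 = 1 := by
    simp only [ha]
    have h : L 0 = {u} := by
      ext x
      rw [Finset.mem_singleton, hmemL, hconn.dist_eq_zero_iff]
      exact eq_comm
    rw [h, card_singleton]
  have had : 1 ≤ a d := by
    simp only [ha]
    exact card_pos.mpr ⟨v, (hmemL d v).mpr huv⟩
  have htop : a (d+1) = 0 := by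
    rw [ha, card_eq_zero]
    rw [eq_empty_iff_forall_notMem]
    intro x hx
    rw [hmemL] at hx
    have := hdle x
    omega
  have hsum : ∑ i ∈ range (d+1), a i = n := by
    rw [← hcard, ← Finset.card_univ, ha]
    exact (Finset.card_eq_sum_card_fiberwise
      (fun x _ => mem_range.mpr (Nat.lt_succ_of_le (hdle x)))).symm
  -- middle layers have size ≥ k
  have hmid : ∀ i, 1 ≤ i → i ≤ d - 1 → k ≤ a i := by
    intro i hi1 hi2
    by_contra hik
    push_neg at hik
    set S : Set V := ↑(L i) with hS
    have hSn : S.ncard < k := by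
      rw [hS, Set.ncard_coe_finset]
      exact hik
    have hcon := hconn' S hSn
    have hu : u ∈ Sᶜ := by
      intro hu
      rw [hS, Finset.mem_coe, hmemL] at hu
      rw [SimpleGraph.dist_self] at hu
      omega
    have hv : v ∈ Sᶜ := by
      intro hv
      rw [hS, Finset.mem_coe, hmemL] at hv
      rw [huv] at hv
      omega
    obtain ⟨w⟩ := hcon.preconnected ⟨u, hu⟩ ⟨v, hv⟩
    obtain ⟨z, hz, hzi⟩ := walk_intermediate' G hconn u
      (w.map (SimpleGraph.Embedding.induce Sᶜ).toHom) i
      (by show G.dist u u ≤ i; rw [SimpleGraph.dist_self]; omega)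
      (by show i ≤ G.dist u v; rw [huv]; omega)
    rw [SimpleGraph.Walk.support_map, List.mem_map] at hz
    obtain ⟨z', hz', hz'e⟩ := hz
    have : z ∈ Sᶜ := hz'e ▸ z'.2
    apply this
    rw [hS, Finset.mem_coe, hmemL]
    exact hzi
  -- degree bound
  have hdeg : ∀ x : V, G.degree x
      ≤ a (G.dist u x - 1) + (a (G.dist u x) - 1) + a (G.dist u x + 1) := by
    intro x
    set i := G.dist u x with hi
    have hsub : G.neighborFinset x ⊆ (L (i-1) ∪ (L i).erase x) ∪ L (i+1) := by
      intro y hy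
      rw [SimpleGraph.mem_neighborFinset] at hy
      have e1 : G.dist u y ≤ i + 1 := by
        have h := hconn.dist_triangle (u := u) (v := x) (w := y)
        rwa [(SimpleGraph.dist_eq_one_iff_adj).mpr hy, ← hi] at h
      have e2 : i ≤ G.dist u y + 1 := by
        have h := hconn.dist_triangle (u := u) (v := y) (w := x)
        rwa [(SimpleGraph.dist_eq_one_iff_adj).mpr hy.symm, ← hi] at h
      rcases (show G.dist u y + 1 = i ∨ G.dist u y = i ∨ G.dist u y = i + 1 by omega)
        with h3 | h3 | h3
      · apply mem_union_left; apply mem_union_left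
        rw [hmemL]; omega
      · apply mem_union_left; apply mem_union_right
        rw [mem_erase]
        exact ⟨hy.ne', (hmemL i y).mpr h3⟩
      · apply mem_union_right
        rw [hmemL]; exact h3
    calc G.degree x = (G.neighborFinset x).card := rfl
    _ ≤ ((L (i-1) ∪ (L i).erase x) ∪ L (i+1)).card := card_le_card hsub
    _ ≤ (L (i-1) ∪ (L i).erase x).card + (L (i+1)).card := card_union_le _ _
    _ ≤ ((L (i-1)).card + ((L i).erase x).card) + (L (i+1)).card :=
        Nat.add_le_add_right (card_union_le _ _) _
    _ = a (i-1) + (a i - 1) + a (i+1) := by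
        rw [card_erase_of_mem ((hmemL i x).mpr hi.symm)]
  have hhs : ∑ x : V, G.degree x = 2 * G.edgeFinset.card := G.sum_degrees_eq_twice_card_edges
  have hfib : ∑ x : V, (a (G.dist u x - 1) + (a (G.dist u x) - 1) + a (G.dist u x + 1))
      = ∑ i ∈ range (d+1), a i * (a (i-1) + (a i - 1) + a (i+1)) := by
    rw [← Finset.sum_fiberwise_of_maps_to
      (fun x (_ : x ∈ univ) => mem_range.mpr (Nat.lt_succ_of_le (hdle x)))
      (fun x => a (G.dist u x - 1) + (a (G.dist u x) - 1) + a (G.dist u x + 1))]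
    refine sum_congr rfl fun i hi => ?_
    rw [Finset.sum_congr rfl (fun x hx => by rw [(mem_filter.mp hx).2]),
      Finset.sum_const, smul_eq_mul]
  have hE : 2 * G.edgeFinset.card
      ≤ ∑ i ∈ range (d+1), a i * (a (i-1) + (a i - 1) + a (i+1)) := by
    rw [← hhs, ← hfib]
    exact Finset.sum_le_sum (fun x _ => hdeg x)
  have hfin := main_alg k d n hk hd a ha0 had hmid hsum htop G.edgeFinset.card hE
  have hcnt : G.edgeSet.ncard = G.edgeFinset.card := by
    rw [SimpleGraph.edgeFinset]
    exact Set.ncard_eq_toFinset_card' _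
  rw [hcnt]
  exact_mod_cast hfin
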